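/- In the setting of the AdiaConvert construction, assume additionally W ≥ ε/2, and define P_x(s,ε) = |ψ_x^+(s,ε)⟩⟨ψ_x^+(s,ε)| and X_x(s,ε) = (π/(2N_x(ε)))·|Ψ_x^−(s,ε)⟩⟨ψ_x^+(s,ε)|. Then for every x ∈ 𝕏 and s ∈ [0,1]: (i) ‖X_x(s,ε)‖ ≤ (π√5/2)·(W/ε), and (ii) ‖(∂_s X_x(s,ε))·P_x(s,ε)‖ ≤ (π²/√2)·(W/ε), where ‖·‖ is the operator norm. -/

import Mathlib

noncomputable section
open scoped ComplexConjugate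

namespace AdiaConvert

/-- Index type of the Hilbert space `H = H_O ⊕ (ℂⁿ ⊗ ℂ^{Σ∪{0̄}} ⊗ H_W)`, where
`H_O = ℂ² ⊗ H'`, `H' = ℂ^V`, `H_W = ℂ^W`, and the blank symbol `0̄` is `Option.none`. -/
abbrev Idx (Al V W : Type*) (n : ℕ) : Type _ := (Fin 2 × V) ⊕ (Fin n × Option Al × W)

/-- The Hilbert space of the AdiaConvert algorithm. -/
abbrev Hsp (Al V W : Type*) (n : ℕ) : Type _ := EuclideanSpace ℂ (Idx Al V W n)

/-- Build a vector of `Hsp` from its coordinates. -/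
def mk {Al V W : Type*} {n : ℕ} (f : Idx Al V W n → ℂ) : Hsp Al V W n :=
  (WithLp.equiv 2 _).symm f

variable {Al V W X : Type*} {n : ℕ}

/-- `θ(s) = πs/2`. -/
def θ (s : ℝ) : ℝ := Real.pi * s / 2

/-- `ξ(s) = 2 cos θ(s) sin θ(s)`. -/
def ξ (s : ℝ) : ℝ := 2 * Real.cos (θ s) * Real.sin (θ s)

/-- The coordinates of `|y⁺⟩ = (|0̄⟩ + |y⟩)/√2`. -/
def gP [DecidableEq Al] (y : Al) : Option Al → ℂ := fun a =>
  if a = none then (Real.sqrt 2 : ℂ)⁻¹ else if a = some y then (Real.sqrt 2 : ℂ)⁻¹ else 0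

/-- The coordinates of `|y⁻⟩ = (|0̄⟩ - |y⟩)/√2`. -/
def gM [DecidableEq Al] (y : Al) : Option Al → ℂ := fun a =>
  if a = none then (Real.sqrt 2 : ℂ)⁻¹ else if a = some y then -(Real.sqrt 2 : ℂ)⁻¹ else 0

/-- `|k_x⁺(s)⟩ = cos θ(s) |0,ρ_x⟩ + sin θ(s) |1,σ_x⟩` (embedded in `H`). -/
def kP (ρv σv : X → EuclideanSpace ℂ V) (s : ℝ) (x : X) : Hsp Al V W n :=
  mk fun q => match q with
  | .inl (b, i) => if b = 0 then (Real.cos (θ s) : ℂ) * ρv x i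
                   else (Real.sin (θ s) : ℂ) * σv x i
  | .inr _ => 0

/-- `|k_x⁻(s)⟩ = -sin θ(s) |0,ρ_x⟩ + cos θ(s) |1,σ_x⟩` (embedded in `H`). -/
def kM (ρv σv : X → EuclideanSpace ℂ V) (s : ℝ) (x : X) : Hsp Al V W n :=
  mk fun q => match q with
  | .inl (b, i) => if b = 0 then -(Real.sin (θ s) : ℂ) * ρv x i
                   else (Real.cos (θ s) : ℂ) * σv x i
  | .inr _ => 0

/-- `∑ᵢ |i⟩ ⊗ |x_i^±⟩ ⊗ |c_{x,i}⟩` (embedded in `H`), where the `ℂ^{Σ∪{0̄}}` part has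
coordinates `g (x_i)`. -/
def qPart (g : Al → Option Al → ℂ) (inp : X → Fin n → Al)
    (c : X → Fin n → EuclideanSpace ℂ W) (x : X) : Hsp Al V W n :=
  mk fun q => match q with
  | .inl _ => 0
  | .inr (i, a, w) => g (inp x i) a * c x i w

/-- The non-normalized state `|Ψ_x⁺(s,ε)⟩`. -/
def PsiP [DecidableEq Al] (ρv σv : X → EuclideanSpace ℂ V) (inp : X → Fin n → Al)
    (u : X → Fin n → EuclideanSpace ℂ W) (Wr s ε : ℝ) (x : X) : Hsp Al V W n :=
  kP ρv σv s x + ((ε / Real.sqrt Wr : ℝ) : ℂ) • qPart gP inp u x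

/-- The non-normalized state `|Ψ_x⁻(s,ε)⟩`. -/
def PsiM [DecidableEq Al] (ρv σv : X → EuclideanSpace ℂ V) (inp : X → Fin n → Al)
    (v : X → Fin n → EuclideanSpace ℂ W) (Wr s ε : ℝ) (x : X) : Hsp Al V W n :=
  kM ρv σv s x + ((ξ s * (Real.sqrt Wr / ε) : ℝ) : ℂ) • qPart gM inp v x

/-- The normalized state `|ψ_x⁺(s,ε)⟩`. -/
def psiP [Fintype Al] [Fintype V] [Fintype W] [DecidableEq Al] (ρv σv : X → EuclideanSpace ℂ V) (inp : X → Fin n → Al)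
    (u : X → Fin n → EuclideanSpace ℂ W) (Wr s ε : ℝ) (x : X) : Hsp Al V W n :=
  ‖PsiP ρv σv inp u Wr s ε x‖⁻¹ • PsiP ρv σv inp u Wr s ε x

/-- The rank-one operator `|a⟩⟨b| : v ↦ ⟨b|v⟩·a`. -/
def ketbra [Fintype Al] [Fintype V] [Fintype W]
    (a b : Hsp Al V W n) : Hsp Al V W n →L[ℂ] Hsp Al V W n :=
  (innerSL ℂ b).smulRight a

/-- The orthogonal projection `Λ(s,ε)` onto `span{|Ψ_x⁻(s,ε)⟩ : x ∈ 𝕏}`. -/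
def Lam [Fintype Al] [Fintype V] [Fintype W] [DecidableEq Al]
    (ρv σv : X → EuclideanSpace ℂ V) (inp : X → Fin n → Al)
    (v : X → Fin n → EuclideanSpace ℂ W) (Wr s ε : ℝ) :
    Hsp Al V W n →L[ℂ] Hsp Al V W n :=
  (Submodule.span ℂ (Set.range fun x : X => PsiM ρv σv inp v Wr s ε x)).subtypeL.comp
    (Submodule.orthogonalProjectionOnto
      (Submodule.span ℂ (Set.range fun x : X => PsiM ρv σv inp v Wr s ε x)))

/-- The matrix of the oracle Hamiltonian `Π_x = ∑ᵢ |i⟩⟨i| ⊗ |x_i⁻⟩⟨x_i⁻| ⊗ I_W`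
(acting as `0` on `H_O`). -/
def PiMat [DecidableEq Al] [DecidableEq W] (inp : X → Fin n → Al) (x : X) :
    Matrix (Idx Al V W n) (Idx Al V W n) ℂ :=
  fun q q' => match q, q' with
  | .inr (i, a, w), .inr (i', a', w') =>
      if i = i' ∧ w = w' then gM (inp x i) a * conj (gM (inp x i) a') else 0
  | _, _ => 0

/-- The oracle Hamiltonian `Π_x` as an operator on `H`. -/
def PiC [Fintype Al] [Fintype V] [Fintype W]
    [DecidableEq Al] [DecidableEq V] [DecidableEq W]
    (inp : X → Fin n → Al) (x : X) : Hsp Al V W n →L[ℂ] Hsp Al V W n :=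
  Matrix.toEuclideanCLM (𝕜 := ℂ) (PiMat inp x)

/-- The total Hamiltonian `H_x(s,ε) = Λ(s,ε) − Π_x`. -/
def Hx [Fintype Al] [Fintype V] [Fintype W]
    [DecidableEq Al] [DecidableEq V] [DecidableEq W]
    (ρv σv : X → EuclideanSpace ℂ V) (inp : X → Fin n → Al)
    (v : X → Fin n → EuclideanSpace ℂ W) (Wr s ε : ℝ) (x : X) :
    Hsp Al V W n →L[ℂ] Hsp Al V W n :=
  Lam ρv σv inp v Wr s ε - PiC inp x

/-- The projection `P_x(s,ε) = |ψ_x⁺(s,ε)⟩⟨ψ_x⁺(s,ε)|`. -/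
def Pproj [Fintype Al] [Fintype V] [Fintype W] [DecidableEq Al]
    (ρv σv : X → EuclideanSpace ℂ V) (inp : X → Fin n → Al)
    (u : X → Fin n → EuclideanSpace ℂ W) (Wr s ε : ℝ) (x : X) :
    Hsp Al V W n →L[ℂ] Hsp Al V W n :=
  ketbra (psiP ρv σv inp u Wr s ε x) (psiP ρv σv inp u Wr s ε x)

/-- The operator `X_x(s,ε) = (π/(2N_x(ε))) |Ψ_x⁻(s,ε)⟩⟨ψ_x⁺(s,ε)|`. -/
def Xx [Fintype Al] [Fintype V] [Fintype W] [DecidableEq Al]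
    (ρv σv : X → EuclideanSpace ℂ V) (inp : X → Fin n → Al)
    (u v : X → Fin n → EuclideanSpace ℂ W) (Wr s ε : ℝ) (x : X) :
    Hsp Al V W n →L[ℂ] Hsp Al V W n :=
  ((Real.pi / (2 * ‖PsiP ρv σv inp u Wr s ε x‖) : ℝ) : ℂ) •
    ketbra (PsiM ρv σv inp v Wr s ε x) (psiP ρv σv inp u Wr s ε x)

end AdiaConvert

open AdiaConvert

namespace AdiaConvertAux

open AdiaConvert
open scoped ComplexConjugate

variable {Al V W X : Type*} {n : ℕ}

lemma norm_sq_eq {ι : Type*} [Fintype ι] (y : EuclideanSpace ℂ ι) :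
    ‖y‖ ^ 2 = ∑ i, ‖y i‖ ^ 2 := by
  rw [EuclideanSpace.norm_eq, Real.sq_sqrt]
  positivity

lemma norm_sqrt2_inv_sq : ‖((Real.sqrt 2 : ℝ) : ℂ)⁻¹‖ ^ 2 = 1 / 2 := by
  rw [norm_inv, Complex.norm_real, Real.norm_eq_abs, abs_of_nonneg (Real.sqrt_nonneg 2)]
  rw [inv_pow, Real.sq_sqrt (by norm_num : (0:ℝ) ≤ 2)]
  norm_num

set_option linter.unusedSectionVars false
set_option synthInstance.maxHeartbeats 1000000
set_option maxHeartbeats 1000000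

section lems
variable [Fintype Al] [Fintype V] [Fintype W] [DecidableEq Al]
variable (ρv σv : X → EuclideanSpace ℂ V) (inp : X → Fin n → Al)
  (c : X → Fin n → EuclideanSpace ℂ W) (g : Al → Option Al → ℂ) (s : ℝ) (x : X)

lemma inner_kP_qPart :
    (inner ℂ (kP ρv σv s x) (qPart g inp c x : Hsp Al V W n) : ℂ) = 0 := by
  simp [kP, qPart, AdiaConvert.mk, PiLp.inner_apply, Fintype.sum_sum_type, RCLike.inner_apply]

lemma inner_kM_qPart :
    (inner ℂ (kM ρv σv s x) (qPart g inp c x : Hsp Al V W n) : ℂ) = 0 := by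
  simp [kM, qPart, AdiaConvert.mk, PiLp.inner_apply, Fintype.sum_sum_type, RCLike.inner_apply]

lemma inner_kM_kP (hρ : ‖ρv x‖ = 1) (hσ : ‖σv x‖ = 1) :
    (inner ℂ (kM ρv σv s x) (kP ρv σv s x : Hsp Al V W n) : ℂ) = 0 := by
  have h1 : ∑ i, conj (ρv x i) * ρv x i = (1 : ℂ) := by
    have := inner_self_eq_norm_sq_to_K (𝕜 := ℂ) (ρv x)
    rw [PiLp.inner_apply] at this
    simpa [RCLike.inner_apply, hρ, Complex.conj_mul'] using this
  have h2 : ∑ i, conj (σv x i) * σv x i = (1 : ℂ) := by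
    have := inner_self_eq_norm_sq_to_K (𝕜 := ℂ) (σv x)
    rw [PiLp.inner_apply] at this
    simpa [RCLike.inner_apply, hσ, Complex.conj_mul'] using this
  simp only [kM, kP, AdiaConvert.mk, PiLp.inner_apply, RCLike.inner_apply,
    WithLp.equiv_symm_apply, PiLp.toLp_apply, Fintype.sum_sum_type, Fintype.sum_prod_type, Fin.sum_univ_two]
  simp only [map_mul, map_zero, mul_zero, zero_mul, Finset.sum_const_zero, add_zero,
    Fin.zero_eq_one_iff, if_true, if_false, eq_self_iff_true, one_ne_zero, Fin.one_eq_zero_iff,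
    Nat.succ_ne_self, map_neg, neg_mul, Complex.conj_ofReal]
  have e1 : ∑ i : V, (Real.cos (θ s) : ℂ) * ρv x i * -((Real.sin (θ s) : ℂ) * conj (ρv x i))
      = -((Real.sin (θ s) : ℂ) * (Real.cos (θ s) : ℂ)) * ∑ i, conj (ρv x i) * ρv x i := by
    rw [Finset.mul_sum]; exact Finset.sum_congr rfl fun i _ => by ring
  have e2 : ∑ i : V, (Real.sin (θ s) : ℂ) * σv x i * ((Real.cos (θ s) : ℂ) * conj (σv x i))
      = ((Real.cos (θ s) : ℂ) * (Real.sin (θ s) : ℂ)) * ∑ i, conj (σv x i) * σv x i := by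
    rw [Finset.mul_sum]; exact Finset.sum_congr rfl fun i _ => by ring
  rw [e1, e2, h1, h2]; ring

lemma norm_kP (hρ : ‖ρv x‖ = 1) (hσ : ‖σv x‖ = 1) :
    ‖(kP ρv σv s x : Hsp Al V W n)‖ = 1 := by
  have h1 : ∑ i, ‖ρv x i‖ ^ 2 = 1 := by
    have := norm_sq_eq (ρv x); rw [hρ] at this; simpa using this.symm
  have h2 : ∑ i, ‖σv x i‖ ^ 2 = 1 := by
    have := norm_sq_eq (σv x); rw [hσ] at this; simpa using this.symm
  have : ‖(kP ρv σv s x : Hsp Al V W n)‖ ^ 2 = 1 := by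
    rw [norm_sq_eq]
    simp only [kP, AdiaConvert.mk, WithLp.equiv_symm_apply, PiLp.toLp_apply, Fintype.sum_sum_type,
      Fintype.sum_prod_type, Fin.sum_univ_two]
    simp only [if_true, if_false, eq_self_iff_true, one_ne_zero, Fin.one_eq_zero_iff,
      Nat.succ_ne_self, norm_zero, Finset.sum_const_zero, add_zero, norm_mul, mul_pow,
      Complex.norm_real]
    rw [← Finset.mul_sum, ← Finset.mul_sum, h1, h2]
    simp [sq_abs]
  nlinarith [norm_nonneg (kP ρv σv s x : Hsp Al V W n)]

lemma norm_kM (hρ : ‖ρv x‖ = 1) (hσ : ‖σv x‖ = 1) :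
    ‖(kM ρv σv s x : Hsp Al V W n)‖ = 1 := by
  have h1 : ∑ i, ‖ρv x i‖ ^ 2 = 1 := by
    have := norm_sq_eq (ρv x); rw [hρ] at this; simpa using this.symm
  have h2 : ∑ i, ‖σv x i‖ ^ 2 = 1 := by
    have := norm_sq_eq (σv x); rw [hσ] at this; simpa using this.symm
  have : ‖(kM ρv σv s x : Hsp Al V W n)‖ ^ 2 = 1 := by
    rw [norm_sq_eq]
    simp only [kM, AdiaConvert.mk, WithLp.equiv_symm_apply, PiLp.toLp_apply, Fintype.sum_sum_type,
      Fintype.sum_prod_type, Fin.sum_univ_two]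
    simp only [if_true, if_false, eq_self_iff_true, one_ne_zero, Fin.one_eq_zero_iff,
      Nat.succ_ne_self, norm_zero, Finset.sum_const_zero, add_zero, norm_mul, mul_pow,
      Complex.norm_real, norm_neg]
    rw [← Finset.mul_sum, ← Finset.mul_sum, h1, h2]
    simp [sq_abs]
  nlinarith [norm_nonneg (kM ρv σv s x : Hsp Al V W n)]

lemma norm_qPart_sq (hg : ∀ y, ∑ a, ‖g y a‖ ^ 2 = 1) :
    ‖(qPart g inp c x : Hsp Al V W n)‖ ^ 2 = ∑ i, ‖c x i‖ ^ 2 := by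
  rw [norm_sq_eq]
  simp only [qPart, AdiaConvert.mk, WithLp.equiv_symm_apply, PiLp.toLp_apply, Fintype.sum_sum_type,
    Fintype.sum_prod_type, norm_zero, Finset.sum_const_zero, zero_add, norm_mul, mul_pow,
    zero_pow]
  simp only [ne_eq, OfNat.ofNat_ne_zero, not_false_eq_true, zero_pow, Finset.sum_const_zero,
    zero_add]
  refine Finset.sum_congr rfl fun i _ => ?_
  rw [← Finset.sum_mul_sum, hg, one_mul, ← norm_sq_eq]

lemma gP_normalized (y : Al) : ∑ a, ‖gP y a‖ ^ 2 = 1 := by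
  rw [Fintype.sum_option]
  have h2 : ∑ a : Al, ‖gP y (some a)‖ ^ 2 = 1/2 := by
    have h : ∀ a : Al, ‖gP y (some a)‖ ^ 2 = if a = y then 1/2 else 0 := by
      intro a; by_cases h : a = y <;> simp [gP, h, norm_sqrt2_inv_sq]
    simp only [h]
    simp [Finset.sum_ite_eq']
  rw [h2]
  have : ‖gP y none‖ ^ 2 = 1/2 := by simp [gP, norm_sqrt2_inv_sq]
  rw [this]; norm_num

lemma gM_normalized (y : Al) : ∑ a, ‖gM y a‖ ^ 2 = 1 := by
  rw [Fintype.sum_option]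
  have h2 : ∑ a : Al, ‖gM y (some a)‖ ^ 2 = 1/2 := by
    have h : ∀ a : Al, ‖gM y (some a)‖ ^ 2 = if a = y then 1/2 else 0 := by
      intro a; by_cases h : a = y <;> simp [gM, h, norm_sqrt2_inv_sq]
    simp only [h]
    simp [Finset.sum_ite_eq']
  rw [h2]
  have : ‖gM y none‖ ^ 2 = 1/2 := by simp [gM, norm_sqrt2_inv_sq]
  rw [this]; norm_num

lemma coe_smul_eq (r : ℝ) (y : Hsp Al V W n) : ((r : ℝ) : ℂ) • y = r • y := by
  ext q
  simp [Complex.real_smul, smul_eq_mul]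

lemma inner_real_smul_left (r : ℝ) (a b : Hsp Al V W n) :
    (inner ℂ (r • a) b : ℂ) = (r : ℂ) * inner ℂ a b := by
  rw [← coe_smul_eq, inner_smul_left]
  simp [Complex.conj_ofReal]

lemma inner_real_smul_right (r : ℝ) (a b : Hsp Al V W n) :
    (inner ℂ a (r • b) : ℂ) = (r : ℂ) * inner ℂ a b := by
  rw [← coe_smul_eq, inner_smul_right]

lemma ketbra_apply (a b w : Hsp Al V W n) : ketbra a b w = (inner ℂ b w : ℂ) • a := rfl

lemma ketbra_norm_le (a b : Hsp Al V W n) : ‖ketbra a b‖ ≤ ‖a‖ * ‖b‖ := by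
  refine ContinuousLinearMap.opNorm_le_bound _ (by positivity) fun w => ?_
  rw [ketbra_apply, norm_smul]
  calc ‖(inner ℂ b w : ℂ)‖ * ‖a‖ ≤ (‖b‖ * ‖w‖) * ‖a‖ := by
        gcongr; exact norm_inner_le_norm b w
    _ = ‖a‖ * ‖b‖ * ‖w‖ := by ring

lemma ketbra_comp (a b c d : Hsp Al V W n) :
    (ketbra a b).comp (ketbra c d) = (inner ℂ b c : ℂ) • ketbra a d := by
  refine ContinuousLinearMap.ext fun w => ?_
  simp only [ContinuousLinearMap.comp_apply, ketbra_apply, ContinuousLinearMap.smul_apply,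
    inner_smul_right, smul_smul]
  rw [mul_comm]

lemma isBoundedBilinearMap_ketbra :
    IsBoundedBilinearMap ℝ
      (fun p : Hsp Al V W n × Hsp Al V W n => ketbra p.1 p.2) where
  add_left x₁ x₂ y := ContinuousLinearMap.ext fun w => by
    simp [ketbra_apply, smul_add]
  smul_left r x y := ContinuousLinearMap.ext fun w => by
    simp only [ketbra_apply, ContinuousLinearMap.smul_apply]
    rw [smul_comm]
  add_right x y₁ y₂ := ContinuousLinearMap.ext fun w => by
    simp [ketbra_apply, inner_add_left, add_smul]
  smul_right r x y := ContinuousLinearMap.ext fun w => by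
    simp only [ketbra_apply, ContinuousLinearMap.smul_apply]
    have h : (inner ℂ (r • y) w : ℂ) = (r : ℂ) * inner ℂ y w := by
      rw [← coe_smul_eq r y, inner_smul_left]
      simp [Complex.conj_ofReal]
    rw [h, mul_smul, Complex.coe_smul]
  bound := ⟨(1:ℝ), by norm_num, fun a b => by rw [one_mul]; exact ketbra_norm_le a b⟩

lemma hasDerivAt_ketbra {A B : ℝ → Hsp Al V W n} {A' B' : Hsp Al V W n} {t : ℝ}
    (hA : HasDerivAt A A' t) (hB : HasDerivAt B B' t) :
    HasDerivAt (fun r => ketbra (A r) (B r)) (ketbra (A t) B' + ketbra A' (B t)) t := by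
  have hb : IsBoundedBilinearMap ℝ
      (fun p : Hsp Al V W n × Hsp Al V W n => ketbra p.1 p.2) := isBoundedBilinearMap_ketbra
  have h := (hb.hasFDerivAt (A t, B t)).comp_hasDerivAt t (hA.prodMk hB)
  have h2 : hb.deriv (A t, B t) (A', B') = ketbra (A t) B' + ketbra A' (B t) :=
    hb.deriv_apply (A t, B t) (A', B')
  rw [h2] at h
  exact h

def e0 (ρv : X → EuclideanSpace ℂ V) (x : X) : Hsp Al V W n :=
  AdiaConvert.mk fun q => match q with
  | .inl (b, i) => if b = 0 then ρv x i else 0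
  | .inr _ => 0

def e1 (σv : X → EuclideanSpace ℂ V) (x : X) : Hsp Al V W n :=
  AdiaConvert.mk fun q => match q with
  | .inl (b, i) => if b = 0 then 0 else σv x i
  | .inr _ => 0

lemma kP_eq : (kP ρv σv s x : Hsp Al V W n)
    = Real.cos (θ s) • e0 ρv x + Real.sin (θ s) • e1 σv x := by
  ext q
  rcases q with ⟨b, i⟩ | q
  · by_cases hb : b = 0 <;>
      simp [kP, e0, e1, AdiaConvert.mk, hb, Complex.real_smul]
  · simp [kP, e0, e1, AdiaConvert.mk]

lemma kM_eq : (kM ρv σv s x : Hsp Al V W n)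
    = (-Real.sin (θ s)) • e0 ρv x + Real.cos (θ s) • e1 σv x := by
  ext q
  rcases q with ⟨b, i⟩ | q
  · by_cases hb : b = 0 <;>
      simp [kM, e0, e1, AdiaConvert.mk, hb, Complex.real_smul]
  · simp [kM, e0, e1, AdiaConvert.mk]

lemma hasDerivAt_theta (t : ℝ) : HasDerivAt θ (Real.pi / 2) t := by
  have h := ((hasDerivAt_id t).const_mul Real.pi).div_const 2
  exact (by simpa using h : HasDerivAt (fun x => Real.pi * x / 2) (Real.pi / 2) t)

lemma hasDerivAt_cos_theta (t : ℝ) :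
    HasDerivAt (fun r => Real.cos (θ r)) (-Real.sin (θ t) * (Real.pi / 2)) t :=
  (Real.hasDerivAt_cos (θ t)).comp t (hasDerivAt_theta t)

lemma hasDerivAt_sin_theta (t : ℝ) :
    HasDerivAt (fun r => Real.sin (θ r)) (Real.cos (θ t) * (Real.pi / 2)) t :=
  (Real.hasDerivAt_sin (θ t)).comp t (hasDerivAt_theta t)

lemma hasDerivAt_kP (t : ℝ) :
    HasDerivAt (fun r => (kP ρv σv r x : Hsp Al V W n))
      ((Real.pi / 2) • kM ρv σv t x) t := by
  have h := ((hasDerivAt_cos_theta t).smul_const (e0 ρv x : Hsp Al V W n)).add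
    ((hasDerivAt_sin_theta t).smul_const (e1 σv x : Hsp Al V W n))
  have heq : (fun r => (kP ρv σv r x : Hsp Al V W n))
      = fun r => Real.cos (θ r) • e0 ρv x + Real.sin (θ r) • e1 σv x :=
    funext fun r => kP_eq ρv σv r x
  rw [heq]
  refine h.congr_deriv ?_
  rw [kM_eq]
  module

lemma hasDerivAt_kM (t : ℝ) :
    HasDerivAt (fun r => (kM ρv σv r x : Hsp Al V W n))
      ((-(Real.pi / 2)) • kP ρv σv t x) t := by
  have h := (((hasDerivAt_sin_theta t).neg).smul_const (e0 ρv x : Hsp Al V W n)).add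
    ((hasDerivAt_cos_theta t).smul_const (e1 σv x : Hsp Al V W n))
  have heq : (fun r => (kM ρv σv r x : Hsp Al V W n))
      = fun r => (-Real.sin (θ r)) • e0 ρv x + Real.cos (θ r) • e1 σv x := by
    funext r
    rw [kM_eq]
  rw [heq]
  have heq2 : (fun r => (-Real.sin (θ r)) • (e0 ρv x : Hsp Al V W n) + Real.cos (θ r) • e1 σv x)
      = fun r => (fun r' => -Real.sin (θ r')) r • (e0 ρv x : Hsp Al V W n)
          + Real.cos (θ r) • e1 σv x := rfl
  refine h.congr_deriv ?_
  rw [kP_eq]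
  module

lemma hasDerivAt_xi (t : ℝ) :
    HasDerivAt ξ (Real.pi * (Real.cos (θ t) ^ 2 - Real.sin (θ t) ^ 2)) t := by
  have h := ((hasDerivAt_cos_theta t).const_mul 2).mul (hasDerivAt_sin_theta t)
  have heq : ξ = fun r => 2 * Real.cos (θ r) * Real.sin (θ r) := rfl
  rw [heq]
  refine h.congr_deriv ?_
  ring

variable (u v : X → Fin n → EuclideanSpace ℂ W) (Wr ε : ℝ)

lemma hasDerivAt_PsiP (t : ℝ) :
    HasDerivAt (fun r => PsiP ρv σv inp u Wr r ε x)
      ((Real.pi / 2) • kM ρv σv t x) t := by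
  have h := (hasDerivAt_kP ρv σv x t).add_const
    (((ε / Real.sqrt Wr : ℝ) : ℂ) • (qPart gP inp u x : Hsp Al V W n))
  simpa [PsiP] using h

lemma hasDerivAt_PsiM (t : ℝ) :
    HasDerivAt (fun r => PsiM ρv σv inp v Wr r ε x)
      ((-(Real.pi / 2)) • kP ρv σv t x
        + ((Real.pi * (Real.cos (θ t) ^ 2 - Real.sin (θ t) ^ 2)) * (Real.sqrt Wr / ε)) •
            (qPart gM inp v x : Hsp Al V W n)) t := by
  have h2 := ((hasDerivAt_xi t).mul_const (Real.sqrt Wr / ε)).smul_const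
    (qPart gM inp v x : Hsp Al V W n)
  have h := (hasDerivAt_kM ρv σv x t).add h2
  have heq : (fun r => PsiM ρv σv inp v Wr r ε x)
      = fun r => kM ρv σv r x + (ξ r * (Real.sqrt Wr / ε)) • qPart gM inp v x := by
    funext r
    rw [PsiM, coe_smul_eq]
  rw [heq]
  exact h

lemma inner_kM_PsiP (hρ : ‖ρv x‖ = 1) (hσ : ‖σv x‖ = 1) :
    (inner ℂ (kM ρv σv s x) (PsiP ρv σv inp u Wr s ε x) : ℂ) = 0 := by
  rw [PsiP, inner_add_right, inner_smul_right, inner_kM_kP ρv σv s x hρ hσ,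
    inner_kM_qPart]
  simp

lemma norm_PsiP_sq (hρ : ‖ρv x‖ = 1) (hσ : ‖σv x‖ = 1) :
    ‖PsiP ρv σv inp u Wr s ε x‖ ^ 2
      = 1 + (ε / Real.sqrt Wr) ^ 2 * ‖(qPart gP inp u x : Hsp Al V W n)‖ ^ 2 := by
  have hip : (inner ℂ (kP ρv σv s x)
      ((((ε / Real.sqrt Wr : ℝ)) : ℂ) • (qPart gP inp u x : Hsp Al V W n)) : ℂ) = 0 := by
    rw [inner_smul_right, inner_kP_qPart]; simp
  rw [PsiP, norm_add_sq (𝕜 := ℂ), hip, norm_kP ρv σv s x hρ hσ, norm_smul, mul_pow]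
  have habs : ‖(((ε / Real.sqrt Wr : ℝ)) : ℂ)‖ ^ 2 = (ε / Real.sqrt Wr) ^ 2 := by
    rw [Complex.norm_real, Real.norm_eq_abs, sq_abs]
  rw [habs]
  simp

lemma norm_PsiM_sq (hρ : ‖ρv x‖ = 1) (hσ : ‖σv x‖ = 1) :
    ‖PsiM ρv σv inp v Wr s ε x‖ ^ 2
      = 1 + (ξ s * (Real.sqrt Wr / ε)) ^ 2 * ‖(qPart gM inp v x : Hsp Al V W n)‖ ^ 2 := by
  have hip : (inner ℂ (kM ρv σv s x)
      ((((ξ s * (Real.sqrt Wr / ε) : ℝ)) : ℂ) • (qPart gM inp v x : Hsp Al V W n)) : ℂ) = 0 := by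
    rw [inner_smul_right, inner_kM_qPart]; simp
  rw [PsiM, norm_add_sq (𝕜 := ℂ), hip, norm_kM ρv σv s x hρ hσ, norm_smul, mul_pow]
  have habs : ‖(((ξ s * (Real.sqrt Wr / ε) : ℝ)) : ℂ)‖ ^ 2 = (ξ s * (Real.sqrt Wr / ε)) ^ 2 := by
    rw [Complex.norm_real, Real.norm_eq_abs, sq_abs]
  rw [habs]
  simp

end lems
end AdiaConvertAux

set_option maxHeartbeats 2000000
set_option synthInstance.maxHeartbeats 1000000

/-- assuming `W ≥ ε/2`, the operators `X_x(s,ε)` and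
`(∂ₛX_x(s,ε))P_x(s,ε)` satisfy `‖X_x(s,ε)‖ ≤ (π√5/2)(W/ε)` and
`‖(∂ₛX_x(s,ε))P_x(s,ε)‖ ≤ (π²/√2)(W/ε)`. -/
theorem stmt19
    {Al V W : Type*} [Fintype Al] [DecidableEq Al] [Fintype V] [DecidableEq V]
    [Fintype W] [DecidableEq W]
    {n : ℕ} {X : Type*} [Fintype X] (inp : X → Fin n → Al)
    (ρv σv : X → EuclideanSpace ℂ V)
    (hρ : ∀ x, ‖ρv x‖ = 1) (hσ : ∀ x, ‖σv x‖ = 1)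
    (Wr : ℝ) (hW : 0 < Wr)
    (u v : X → Fin n → EuclideanSpace ℂ W)
    (hu : ∀ x, ∑ i, ‖u x i‖ ^ 2 ≤ Wr) (hv : ∀ x, ∑ i, ‖v x i‖ ^ 2 ≤ Wr)
    (hadv : ∀ x y : X,
      (inner ℂ (ρv x) (ρv y) : ℂ) - (inner ℂ (σv x) (σv y) : ℂ) =
        ∑ i ∈ Finset.univ.filter (fun i => inp x i ≠ inp y i),
          (inner ℂ (u x i) (v y i) : ℂ))
    (ε : ℝ) (hε0 : 0 < ε) (hε1 : ε ≤ 1)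
    (hWε : ε / 2 ≤ Wr) :
    ∀ x : X, ∀ s ∈ Set.Icc (0:ℝ) 1,
      ‖Xx ρv σv inp u v Wr s ε x‖ ≤ Real.pi * Real.sqrt 5 / 2 * (Wr / ε) ∧
      ∃ X' : Hsp Al V W n →L[ℂ] Hsp Al V W n,
        HasDerivWithinAt (fun t => Xx ρv σv inp u v Wr t ε x) X' (Set.Icc 0 1) s ∧
        ‖X'.comp (Pproj ρv σv inp u Wr s ε x)‖ ≤
          Real.pi ^ 2 / Real.sqrt 2 * (Wr / ε) := by
  intro x s hs
  have hρx := hρ x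
  have hσx := hσ x
  have hπ := Real.pi_pos
  have hsW : 0 < Real.sqrt Wr := Real.sqrt_pos.2 hW
  have hquW : ‖(qPart gP inp u x : Hsp Al V W n)‖ ^ 2 ≤ Wr := by
    rw [AdiaConvertAux.norm_qPart_sq inp u gP x AdiaConvertAux.gP_normalized]; exact hu x
  have hqvW : ‖(qPart gM inp v x : Hsp Al V W n)‖ ^ 2 ≤ Wr := by
    rw [AdiaConvertAux.norm_qPart_sq inp v gM x AdiaConvertAux.gM_normalized]; exact hv x
  set Nv : ℝ :=
    Real.sqrt (1 + (ε / Real.sqrt Wr) ^ 2 * ‖(qPart gP inp u x : Hsp Al V W n)‖ ^ 2) with hNv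
  have hN : ∀ t, ‖PsiP ρv σv inp u Wr t ε x‖ = Nv := by
    intro t
    rw [hNv, ← AdiaConvertAux.norm_PsiP_sq ρv σv inp t x u Wr ε hρx hσx,
      Real.sqrt_sq (norm_nonneg _)]
  have hN1 : 1 ≤ Nv := by
    rw [hNv]
    have h : (1:ℝ) ≤ 1 + (ε / Real.sqrt Wr) ^ 2 * ‖(qPart gP inp u x : Hsp Al V W n)‖ ^ 2 := by
      nlinarith [sq_nonneg (ε / Real.sqrt Wr), sq_nonneg ‖(qPart gP inp u x : Hsp Al V W n)‖,
        sq_nonneg ((ε / Real.sqrt Wr) * ‖(qPart gP inp u x : Hsp Al V W n)‖)]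
    calc (1:ℝ) = Real.sqrt 1 := by simp
      _ ≤ _ := Real.sqrt_le_sqrt h
  have hNpos : 0 < Nv := lt_of_lt_of_le one_pos hN1
  have hψ : psiP ρv σv inp u Wr s ε x = Nv⁻¹ • PsiP ρv σv inp u Wr s ε x := by
    rw [psiP, hN s]
  have hψnorm : ‖psiP ρv σv inp u Wr s ε x‖ = 1 := by
    rw [hψ, norm_smul, hN s, Real.norm_eq_abs, abs_of_pos (inv_pos.2 hNpos),
      inv_mul_cancel₀ hNpos.ne']
  have hWε' : (1:ℝ) / 2 ≤ Wr / ε := by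
    rw [div_le_div_iff₀ (by norm_num) hε0]; linarith
  have hWεpos : 0 < Wr / ε := by positivity
  have hc : ‖((Real.pi / (2 * Nv) : ℝ) : ℂ)‖ = Real.pi / (2 * Nv) := by
    rw [Complex.norm_real, Real.norm_eq_abs, abs_of_pos (by positivity)]
  constructor
  · -- part (i)
    have hξsq : (ξ s) ^ 2 ≤ 1 := by
      have hξ : ξ s = 2 * Real.cos (θ s) * Real.sin (θ s) := rfl
      rw [hξ]
      nlinarith [Real.sin_sq_add_cos_sq (θ s),
        sq_nonneg (Real.cos (θ s) ^ 2 - Real.sin (θ s) ^ 2)]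
    have hPsiM_sq : ‖PsiM ρv σv inp v Wr s ε x‖ ^ 2 ≤ 1 + Wr ^ 2 / ε ^ 2 := by
      rw [AdiaConvertAux.norm_PsiM_sq ρv σv inp s x v Wr ε hρx hσx]
      have h1 : (ξ s * (Real.sqrt Wr / ε)) ^ 2 = ξ s ^ 2 * (Wr / ε ^ 2) := by
        rw [mul_pow, div_pow, Real.sq_sqrt hW.le]
      rw [h1]
      have h0 : (0:ℝ) ≤ Wr / ε ^ 2 := by positivity
      have hq0 : (0:ℝ) ≤ ‖(qPart gM inp v x : Hsp Al V W n)‖ ^ 2 := sq_nonneg _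
      have key : ξ s ^ 2 * (Wr / ε ^ 2) * ‖(qPart gM inp v x : Hsp Al V W n)‖ ^ 2
          ≤ 1 * (Wr / ε ^ 2) * Wr := by
        apply mul_le_mul _ hqvW hq0 (by positivity)
        exact mul_le_mul_of_nonneg_right hξsq h0
      have : (1:ℝ) * (Wr / ε ^ 2) * Wr = Wr ^ 2 / ε ^ 2 := by ring
      linarith [key, this]
    have hfive : ‖PsiM ρv σv inp v Wr s ε x‖ ≤ Real.sqrt 5 * (Wr / ε) := by
      have hq14 : (1:ℝ) / 4 ≤ (Wr / ε) ^ 2 := by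
        nlinarith [hWε', sq_nonneg (Wr / ε - 1 / 2)]
      have hb : ‖PsiM ρv σv inp v Wr s ε x‖ ^ 2 ≤ 5 * (Wr / ε) ^ 2 := by
        have : Wr ^ 2 / ε ^ 2 = (Wr / ε) ^ 2 := by rw [div_pow]
        nlinarith [hPsiM_sq]
      have hb2 : (Real.sqrt 5 * (Wr / ε)) ^ 2 = 5 * (Wr / ε) ^ 2 := by
        rw [mul_pow, Real.sq_sqrt (by norm_num : (0:ℝ) ≤ 5)]
      nlinarith [norm_nonneg (PsiM ρv σv inp v Wr s ε x), Real.sqrt_nonneg (5:ℝ),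
        hWεpos.le, mul_nonneg (Real.sqrt_nonneg (5:ℝ)) hWεpos.le]
    have hXx : Xx ρv σv inp u v Wr s ε x = ((Real.pi / (2 * Nv) : ℝ) : ℂ) •
        ketbra (PsiM ρv σv inp v Wr s ε x) (psiP ρv σv inp u Wr s ε x) := by
      rw [Xx, hN s]
    rw [hXx]
    refine le_trans (ContinuousLinearMap.opNorm_smul_le _ _) ?_
    rw [hc]
    have hket := AdiaConvertAux.ketbra_norm_le (PsiM ρv σv inp v Wr s ε x)
      (psiP ρv σv inp u Wr s ε x)
    rw [hψnorm, mul_one] at hket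
    calc Real.pi / (2 * Nv) *
          ‖ketbra (PsiM ρv σv inp v Wr s ε x) (psiP ρv σv inp u Wr s ε x)‖
        ≤ Real.pi / (2 * 1) * (Real.sqrt 5 * (Wr / ε)) := by
          gcongr
          exact hket.trans hfive
      _ = Real.pi * Real.sqrt 5 / 2 * (Wr / ε) := by ring
  · -- part (ii)
    set M' : Hsp Al V W n := (-(Real.pi / 2)) • kP ρv σv s x
        + ((Real.pi * (Real.cos (θ s) ^ 2 - Real.sin (θ s) ^ 2)) * (Real.sqrt Wr / ε)) •
            (qPart gM inp v x : Hsp Al V W n) with hM'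
    set B' : Hsp Al V W n := Nv⁻¹ • ((Real.pi / 2) • kM ρv σv s x) with hB'
    refine ⟨((Real.pi / (2 * Nv) : ℝ) : ℂ) •
        (ketbra (PsiM ρv σv inp v Wr s ε x) B' + ketbra M' (psiP ρv σv inp u Wr s ε x)),
      ?_, ?_⟩
    · have hfun : (fun t => Xx ρv σv inp u v Wr t ε x)
          = fun t => ((Real.pi / (2 * Nv) : ℝ) : ℂ) •
              ketbra (PsiM ρv σv inp v Wr t ε x) (Nv⁻¹ • PsiP ρv σv inp u Wr t ε x) := by
        funext t
        rw [Xx, hN t, psiP, hN t]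
      rw [hfun]
      have hA := AdiaConvertAux.hasDerivAt_PsiM ρv σv inp x v Wr ε s
      have hB := (AdiaConvertAux.hasDerivAt_PsiP ρv σv inp x u Wr ε s).const_smul (Nv⁻¹)
      have hk := (AdiaConvertAux.hasDerivAt_ketbra hA hB).const_smul
        (((Real.pi / (2 * Nv) : ℝ) : ℂ))
      simp only [Pi.smul_apply] at hk
      rw [← hψ] at hk
      exact hk.hasDerivWithinAt
    · have hinner1 : (inner ℂ B' (psiP ρv σv inp u Wr s ε x) : ℂ) = 0 := by
        rw [hψ, hB', AdiaConvertAux.inner_real_smul_left, AdiaConvertAux.inner_real_smul_left,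
          AdiaConvertAux.inner_real_smul_right,
          AdiaConvertAux.inner_kM_PsiP ρv σv inp s x u Wr ε hρx hσx]
        simp
      have hinner2 : (inner ℂ (psiP ρv σv inp u Wr s ε x) (psiP ρv σv inp u Wr s ε x) : ℂ) = 1 := by
        rw [inner_self_eq_norm_sq_to_K, hψnorm]
        norm_num
      have hcomp : ((((Real.pi / (2 * Nv) : ℝ) : ℂ) •
          (ketbra (PsiM ρv σv inp v Wr s ε x) B' + ketbra M' (psiP ρv σv inp u Wr s ε x))).comp
            (Pproj ρv σv inp u Wr s ε x))
          = ((Real.pi / (2 * Nv) : ℝ) : ℂ) • ketbra M' (psiP ρv σv inp u Wr s ε x) := by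
        rw [Pproj, ContinuousLinearMap.smul_comp, ContinuousLinearMap.add_comp,
          AdiaConvertAux.ketbra_comp, AdiaConvertAux.ketbra_comp, hinner1, hinner2]
        have hz : ((0:ℂ) • ketbra (PsiM ρv σv inp v Wr s ε x) (psiP ρv σv inp u Wr s ε x)
            : Hsp Al V W n →L[ℂ] Hsp Al V W n) = 0 :=
          ContinuousLinearMap.ext fun w => by simp
        have ho : ((1:ℂ) • ketbra M' (psiP ρv σv inp u Wr s ε x)
            : Hsp Al V W n →L[ℂ] Hsp Al V W n) = ketbra M' (psiP ρv σv inp u Wr s ε x) :=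
          ContinuousLinearMap.ext fun w => by simp
        rw [hz, ho, zero_add]
      rw [hcomp]
      refine le_trans (ContinuousLinearMap.opNorm_smul_le _ _) ?_
      rw [hc]
      -- bound ‖M'‖
      have hDsq : (Real.cos (θ s) ^ 2 - Real.sin (θ s) ^ 2) ^ 2 ≤ 1 := by
        nlinarith [Real.sin_sq_add_cos_sq (θ s),
          sq_nonneg (Real.sin (θ s) * Real.cos (θ s))]
      have hM'sq : ‖M'‖ ^ 2 ≤ Real.pi ^ 2 / 4 + Real.pi ^ 2 * (Wr / ε) ^ 2 := by
        have hip : (inner ℂ ((-(Real.pi / 2)) • kP ρv σv s x)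
            (((Real.pi * (Real.cos (θ s) ^ 2 - Real.sin (θ s) ^ 2)) * (Real.sqrt Wr / ε)) •
              (qPart gM inp v x : Hsp Al V W n)) : ℂ) = 0 := by
          rw [AdiaConvertAux.inner_real_smul_left, AdiaConvertAux.inner_real_smul_right,
            AdiaConvertAux.inner_kP_qPart]
          simp
        have t1 : ‖((-(Real.pi / 2)) • kP ρv σv s x : Hsp Al V W n)‖ ^ 2 = Real.pi ^ 2 / 4 := by
          rw [norm_smul, AdiaConvertAux.norm_kP ρv σv s x hρx hσx, mul_one, Real.norm_eq_abs,
            sq_abs]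
          ring
        have t2 : ‖(((Real.pi * (Real.cos (θ s) ^ 2 - Real.sin (θ s) ^ 2)) * (Real.sqrt Wr / ε)) •
            (qPart gM inp v x : Hsp Al V W n))‖ ^ 2 ≤ Real.pi ^ 2 * (Wr / ε) ^ 2 := by
          rw [norm_smul, Real.norm_eq_abs, mul_pow, sq_abs]
          have h2 : ((Real.pi * (Real.cos (θ s) ^ 2 - Real.sin (θ s) ^ 2)) *
              (Real.sqrt Wr / ε)) ^ 2
              = Real.pi ^ 2 * (Real.cos (θ s) ^ 2 - Real.sin (θ s) ^ 2) ^ 2 * (Wr / ε ^ 2) := by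
            rw [mul_pow, mul_pow, div_pow, Real.sq_sqrt hW.le]
          rw [h2]
          have hq0 : (0:ℝ) ≤ ‖(qPart gM inp v x : Hsp Al V W n)‖ ^ 2 := sq_nonneg _
          have key : Real.pi ^ 2 * (Real.cos (θ s) ^ 2 - Real.sin (θ s) ^ 2) ^ 2 * (Wr / ε ^ 2) *
              ‖(qPart gM inp v x : Hsp Al V W n)‖ ^ 2
              ≤ Real.pi ^ 2 * 1 * (Wr / ε ^ 2) * Wr := by
            apply mul_le_mul _ hqvW hq0 (by positivity)
            apply mul_le_mul_of_nonneg_right _ (by positivity)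
            exact mul_le_mul_of_nonneg_left hDsq (by positivity)
          have heq : Real.pi ^ 2 * 1 * (Wr / ε ^ 2) * Wr = Real.pi ^ 2 * (Wr / ε) ^ 2 := by
            field_simp
          linarith [key, heq]
        rw [hM', norm_add_sq (𝕜 := ℂ), hip]
        simp only [map_zero, mul_zero, add_zero]
        linarith [t1, t2]
      have hq14 : (1:ℝ) / 4 ≤ (Wr / ε) ^ 2 := by
        nlinarith [hWε', sq_nonneg (Wr / ε - 1 / 2)]
      have hM'le : ‖M'‖ ≤ Real.sqrt 2 * Real.pi * (Wr / ε) := by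
        have hb : ‖M'‖ ^ 2 ≤ 2 * Real.pi ^ 2 * (Wr / ε) ^ 2 := by nlinarith [hM'sq]
        have hb2 : (Real.sqrt 2 * Real.pi * (Wr / ε)) ^ 2 = 2 * Real.pi ^ 2 * (Wr / ε) ^ 2 := by
          rw [mul_pow, mul_pow, Real.sq_sqrt (by norm_num : (0:ℝ) ≤ 2)]
        nlinarith [norm_nonneg M', Real.sqrt_nonneg (2:ℝ), hWεpos.le, hπ.le,
          mul_nonneg (mul_nonneg (Real.sqrt_nonneg (2:ℝ)) hπ.le) hWεpos.le]
      have hket := AdiaConvertAux.ketbra_norm_le M' (psiP ρv σv inp u Wr s ε x)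
      rw [hψnorm, mul_one] at hket
      have hs2 : Real.sqrt 2 * Real.sqrt 2 = 2 := Real.mul_self_sqrt (by norm_num)
      have hs2pos : 0 < Real.sqrt 2 := Real.sqrt_pos.2 (by norm_num)
      calc Real.pi / (2 * Nv) * ‖ketbra M' (psiP ρv σv inp u Wr s ε x)‖
          ≤ Real.pi / (2 * 1) * (Real.sqrt 2 * Real.pi * (Wr / ε)) := by
            gcongr
            exact hket.trans hM'le
        _ = Real.pi ^ 2 / Real.sqrt 2 * (Wr / ε) := by
            rw [div_mul_eq_mul_div, div_mul_eq_mul_div, div_eq_div_iff (by norm_num) hs2pos.ne']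
            nlinarith [hs2]
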